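/- arXiv:1001.2797 — 6 statements merged into one kernel-verified Lean document; each statement's English description precedes it below -/
import Mathlib

section
/- Let P_α = Σ_{i=1}^d α_i P_i be a mixture of Markov kernels P_i on a measurable space X with nonnegative weights summing to 1, and similarly P_{α'} = Σ_i α'_i P_i with α, α' ∈ Y := [ε,1]^d ∩ Δ_{d-1}. Then for every x, the total variation distance satisfies ‖P_α(x,·) - P_{α'}(x,·)‖_TV ≤ |α - α'| / (ε + |α - α'|) ≤ |α - α'| / ε, where |α - α'| denotes the maximum coordinate difference. -/
open ProbabilityTheory MeasureTheory Finset
open scoped ENNReal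

lemma key_sum_bound {d : ℕ} (ε δ : ℝ) (hε : 0 < ε) (hδ0 : 0 ≤ δ)
    (α α' t : Fin d → ℝ)
    (hα : ∀ i, ε ≤ α i) (hαsum : ∑ i, α i = 1)
    (hα' : ∀ i, ε ≤ α' i)
    (hdiff : ∀ i, α i - α' i ≤ δ)
    (ht0 : ∀ i, 0 ≤ t i) (ht1 : ∀ i, t i ≤ 1) :
    ∑ i, (α i - α' i) * t i ≤ δ / (ε + δ) := by
  classical
  set S := Finset.univ.filter (fun i => 0 ≤ α i - α' i) with hS
  have hεδ : 0 < ε + δ := by linarith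
  have h1 : ∑ i, (α i - α' i) * t i ≤ ∑ i ∈ S, (α i - α' i) * t i := by
    rw [← Finset.sum_filter_add_sum_filter_not Finset.univ (fun i => 0 ≤ α i - α' i)]
    have hneg : ∑ i ∈ Finset.univ.filter (fun i => ¬ 0 ≤ α i - α' i),
        (α i - α' i) * t i ≤ 0 :=
      Finset.sum_nonpos fun i hi =>
        mul_nonpos_of_nonpos_of_nonneg
          (le_of_lt (not_le.mp (Finset.mem_filter.mp hi).2)) (ht0 i)
    rw [← hS]
    linarith
  have h2 : ∑ i ∈ S, (α i - α' i) * t i ≤ ∑ i ∈ S, (α i - α' i) :=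
    Finset.sum_le_sum fun i hi =>
      mul_le_of_le_one_right (Finset.mem_filter.mp hi).2 (ht1 i)
  have h3 : ∑ i ∈ S, (α i - α' i) ≤ (S.card : ℝ) * δ := by
    calc ∑ i ∈ S, (α i - α' i) ≤ ∑ _i ∈ S, δ :=
          Finset.sum_le_sum fun i _ => hdiff i
      _ = (S.card : ℝ) * δ := by rw [Finset.sum_const, nsmul_eq_mul]
  have h4 : ∑ i ∈ S, (α i - α' i) ≤ 1 - (S.card : ℝ) * ε := by
    have ha : ∑ i ∈ S, α i ≤ 1 := by
      rw [← hαsum]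
      exact Finset.sum_le_sum_of_subset_of_nonneg (Finset.subset_univ S)
        (fun i _ _ => le_trans hε.le (hα i))
    have hb : (S.card : ℝ) * ε ≤ ∑ i ∈ S, α' i := by
      calc (S.card : ℝ) * ε = ∑ _i ∈ S, ε := by rw [Finset.sum_const, nsmul_eq_mul]
        _ ≤ ∑ i ∈ S, α' i := Finset.sum_le_sum fun i _ => hα' i
    rw [Finset.sum_sub_distrib]
    linarith
  by_cases hk : (S.card : ℝ) * (ε + δ) ≤ 1
  · have : (S.card : ℝ) * δ ≤ δ / (ε + δ) := by
      rw [le_div_iff₀ hεδ]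
      nlinarith [Nat.cast_nonneg (α := ℝ) S.card]
    linarith
  · push_neg at hk
    have : 1 - (S.card : ℝ) * ε ≤ δ / (ε + δ) := by
      rw [le_div_iff₀ hεδ]
      nlinarith
    linarith

/-- TV bound between two mixtures of the same kernels with different weights. -/
theorem tv_mixture_lipschitz {X : Type*} [MeasurableSpace X]
    (d : ℕ) (hd : 0 < d) (ε : ℝ) (hε : 0 < ε) (hεd : ε ≤ 1 / d)
    (P : Fin d → Kernel X X) (hP : ∀ i, IsMarkovKernel (P i))
    (α α' : Fin d → ℝ)
    (hα : ∀ i, ε ≤ α i ∧ α i ≤ 1) (hαsum : ∑ i, α i = 1)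
    (hα' : ∀ i, ε ≤ α' i ∧ α' i ≤ 1) (hα'sum : ∑ i, α' i = 1)
    (δ : ℝ)
    (hδ : δ = Finset.univ.sup' (univ_nonempty_iff.mpr ⟨⟨0, hd⟩⟩) fun i => |α i - α' i|) :
    (∀ x : X, ∀ A : Set X, MeasurableSet A →
      |((∑ i, ENNReal.ofReal (α i) • (P i x)) A).toReal
        - ((∑ i, ENNReal.ofReal (α' i) • (P i x)) A).toReal| ≤ δ / (ε + δ))
    ∧ δ / (ε + δ) ≤ δ / ε := by
  have hne : (Finset.univ : Finset (Fin d)).Nonempty := univ_nonempty_iff.mpr ⟨⟨0, hd⟩⟩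
  have hδ0 : 0 ≤ δ := by
    rw [hδ]
    exact le_trans (abs_nonneg (α ⟨0, hd⟩ - α' ⟨0, hd⟩)) (Finset.le_sup' (fun i => |α i - α' i|) (Finset.mem_univ ⟨0, hd⟩))
  have hdiff : ∀ i, |α i - α' i| ≤ δ := fun i => by
    rw [hδ]; exact Finset.le_sup' (fun i => |α i - α' i|) (Finset.mem_univ i)
  refine ⟨?_, ?_⟩
  · intro x A hA
    have hinst : ∀ i : Fin d, IsProbabilityMeasure (P i x) := fun i => (hP i).isProbabilityMeasure x
    set t : Fin d → ℝ := fun i => ((P i x) A).toReal with htdef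
    have ht0 : ∀ i, 0 ≤ t i := fun i => ENNReal.toReal_nonneg
    have ht1 : ∀ i, t i ≤ 1 := fun i => by
      have h := prob_le_one (μ := P i x) (s := A)
      simpa using ENNReal.toReal_mono (by simp) h
    have key : ∀ β : Fin d → ℝ, (∀ i, 0 ≤ β i) →
        ((∑ i, ENNReal.ofReal (β i) • (P i x)) A).toReal = ∑ i, β i * t i := by
      intro β hβ
      rw [Measure.coe_finset_sum, Finset.sum_apply]
      rw [ENNReal.toReal_sum]
      · refine Finset.sum_congr rfl fun i _ => ?_
        rw [Measure.smul_apply, smul_eq_mul, ENNReal.toReal_mul,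
          ENNReal.toReal_ofReal (hβ i)]
      · intro i _
        rw [Measure.smul_apply, smul_eq_mul]
        exact ENNReal.mul_ne_top ENNReal.ofReal_ne_top (measure_ne_top _ _)
    rw [key α (fun i => le_trans hε.le (hα i).1), key α' (fun i => le_trans hε.le (hα' i).1)]
    rw [abs_le]
    constructor
    · have h := key_sum_bound ε δ hε hδ0 α' α t (fun i => (hα' i).1) hα'sum
        (fun i => (hα i).1)
        (fun i => le_trans (le_abs_self _) (by rw [abs_sub_comm]; exact hdiff i))
        ht0 ht1
      simp only [sub_mul] at h
      rw [Finset.sum_sub_distrib] at h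
      linarith [h]
    · have h := key_sum_bound ε δ hε hδ0 α α' t (fun i => (hα i).1) hαsum
        (fun i => (hα' i).1)
        (fun i => le_trans (le_abs_self _) (hdiff i))
        ht0 ht1
      simp only [sub_mul] at h
      rw [Finset.sum_sub_distrib] at h
      linarith [h]
  · exact div_le_div_of_nonneg_left hδ0 hε (by linarith)
end

section
/- Let P be a reversible Markov kernel with stationary distribution π satisfying P^m(x,·) ≥ s μ(·) for all x ∈ X, where μ is a probability measure, m a positive integer, and s > 0. Then P is strongly uniformly ergodic with parameters ((⌊log(s/4)/log(1-s)⌋ + 2)m, s²/8): that is, P^{(⌊log(s/4)/log(1-s)⌋+2)m}(x,·) ≥ (s²/8) π(·) for every x ∈ X. -/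
open ProbabilityTheory MeasureTheory
open scoped ENNReal

/-- `kiter P n` is the `n`-step kernel `P^n`. -/
noncomputable def kiter {X : Type*} [MeasurableSpace X] (P : Kernel X X) : ℕ → Kernel X X
  | 0 => Kernel.id
  | n + 1 => P ∘ₖ kiter P n

section Aux

variable {X : Type*} [MeasurableSpace X]

lemma kiter_zero (P : Kernel X X) : kiter P 0 = Kernel.id := rfl
lemma kiter_succ (P : Kernel X X) (n : ℕ) : kiter P (n+1) = P ∘ₖ kiter P n := rfl

instance kiter_markov (P : Kernel X X) [IsMarkovKernel P] : ∀ n, IsMarkovKernel (kiter P n)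
  | 0 => by rw [kiter_zero]; infer_instance
  | n+1 => by
      rw [kiter_succ]
      have := kiter_markov P n
      infer_instance

lemma kiter_succ' (P : Kernel X X) [IsMarkovKernel P] (n : ℕ) :
    kiter P (n+1) = kiter P n ∘ₖ P := by
  induction n with
  | zero => rw [kiter_succ, kiter_zero, Kernel.comp_id, Kernel.id_comp]
  | succ n ih => rw [kiter_succ, ih, ← Kernel.comp_assoc, ← kiter_succ, ih]

lemma kiter_add (P : Kernel X X) [IsMarkovKernel P] (a b : ℕ) :
    kiter P (a + b) = kiter P b ∘ₖ kiter P a := by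
  induction b with
  | zero => rw [Nat.add_zero, kiter_zero, Kernel.id_comp]
  | succ b ih =>
      rw [show a + (b+1) = (a+b)+1 from rfl, kiter_succ, ih, kiter_succ, Kernel.comp_assoc]

lemma kiter_kiter (P : Kernel X X) [IsMarkovKernel P] (m n : ℕ) :
    kiter (kiter P m) n = kiter P (n * m) := by
  induction n with
  | zero => rw [Nat.zero_mul, kiter_zero, kiter_zero]
  | succ n ih =>
      rw [kiter_succ, ih, show (n+1)*m = n*m + m from by ring, kiter_add]

lemma bind_kiter (P : Kernel X X) [IsMarkovKernel P] (π : Measure X) [IsProbabilityMeasure π]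
    (hstat : ∀ A : Set X, MeasurableSet A → π A = ∫⁻ x, P x A ∂π) (n : ℕ) :
    π.bind (kiter P n) = π := by
  induction n with
  | zero =>
      ext A hA
      rw [Measure.bind_apply hA (Kernel.measurable _).aemeasurable]
      simp only [kiter_zero, Kernel.id_apply, Measure.dirac_apply' _ hA]
      rw [lintegral_indicator hA]
      simp
  | succ n ih =>
      ext A hA
      rw [Measure.bind_apply hA (Kernel.measurable _).aemeasurable]
      simp_rw [kiter_succ, Kernel.comp_apply' _ _ _ hA]
      rw [← Measure.lintegral_bind (Kernel.measurable _).aemeasurable (Kernel.measurable_coe P hA).aemeasurable, ih,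
        ← hstat A hA]

lemma kiter_stat (P : Kernel X X) [IsMarkovKernel P] (π : Measure X) [IsProbabilityMeasure π]
    (hstat : ∀ A : Set X, MeasurableSet A → π A = ∫⁻ x, P x A ∂π) (n : ℕ)
    (A : Set X) (hA : MeasurableSet A) : π A = ∫⁻ x, kiter P n x A ∂π := by
  conv_lhs => rw [← bind_kiter P π hstat n]
  rw [Measure.bind_apply hA (Kernel.measurable _).aemeasurable]

lemma kernelSelfAdjoint (K : Kernel X X) [IsMarkovKernel K] (π : Measure X)
    [IsProbabilityMeasure π]
    (hr : ∀ A B : Set X, MeasurableSet A → MeasurableSet B →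
      ∫⁻ x in A, K x B ∂π = ∫⁻ x in B, K x A ∂π)
    {f g : X → ℝ≥0∞} (hf : Measurable f) (hg : Measurable g) :
    ∫⁻ x, f x * ∫⁻ y, g y ∂(K x) ∂π = ∫⁻ x, g x * ∫⁻ y, f y ∂(K x) ∂π := by
  have hswap : (π ⊗ₘ K).map Prod.swap = π ⊗ₘ K := by
    refine MeasureTheory.ext_of_generate_finite _ generateFrom_prod.symm isPiSystem_prod ?_ ?_
    · rintro _ ⟨A, hA, B, hB, rfl⟩
      rw [Measure.map_apply measurable_swap (hA.prod hB)]
      have hsw : Prod.swap ⁻¹' (A ×ˢ B) = B ×ˢ A := by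
        ext p; simp [and_comm]
      rw [hsw, Measure.compProd_apply_prod hB hA, Measure.compProd_apply_prod hA hB, hr B A hB hA]
    · rw [Measure.map_apply measurable_swap MeasurableSet.univ]
      simp
  have hmeas1 : Measurable fun p : X × X => f p.1 * g p.2 :=
    (hf.comp measurable_fst).mul (hg.comp measurable_snd)
  have hmeas2 : Measurable fun p : X × X => g p.1 * f p.2 :=
    (hg.comp measurable_fst).mul (hf.comp measurable_snd)
  calc ∫⁻ x, f x * ∫⁻ y, g y ∂(K x) ∂π
      = ∫⁻ x, ∫⁻ y, f x * g y ∂(K x) ∂π := by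
        congr 1; ext x; rw [lintegral_const_mul _ hg]
    _ = ∫⁻ p, f p.1 * g p.2 ∂(π ⊗ₘ K) := (Measure.lintegral_compProd hmeas1).symm
    _ = ∫⁻ p, g p.1 * f p.2 ∂(π ⊗ₘ K) := by
        conv_lhs => rw [← hswap]
        rw [lintegral_map hmeas1 measurable_swap]
        exact lintegral_congr fun p => by simp [mul_comm]
    _ = ∫⁻ x, ∫⁻ y, g x * f y ∂(K x) ∂π := Measure.lintegral_compProd hmeas2
    _ = ∫⁻ x, g x * ∫⁻ y, f y ∂(K x) ∂π := by
        congr 1; ext x; rw [lintegral_const_mul _ hf]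

lemma setLIntegral_eq_indicator_mul (π : Measure X) {A : Set X} (hA : MeasurableSet A)
    (F : X → ℝ≥0∞) :
    ∫⁻ x in A, F x ∂π = ∫⁻ x, A.indicator (fun _ => (1:ℝ≥0∞)) x * F x ∂π := by
  rw [← lintegral_indicator hA]
  congr 1; ext x
  by_cases hx : x ∈ A <;> simp [hx]

lemma kiter_rev (P : Kernel X X) [IsMarkovKernel P] (π : Measure X) [IsProbabilityMeasure π]
    (hrev : ∀ A B : Set X, MeasurableSet A → MeasurableSet B →
      ∫⁻ x in A, P x B ∂π = ∫⁻ x in B, P x A ∂π) (n : ℕ) :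
    ∀ A B : Set X, MeasurableSet A → MeasurableSet B →
      ∫⁻ x in A, kiter P n x B ∂π = ∫⁻ x in B, kiter P n x A ∂π := by
  induction n with
  | zero =>
      intro A B hA hB
      simp only [kiter_zero, Kernel.id_apply]
      have h : ∀ (C D : Set X), MeasurableSet C → MeasurableSet D →
          ∫⁻ x in C, (Measure.dirac x) D ∂π = π (D ∩ C) := by
        intro C D hC hD
        have : ∀ x, (Measure.dirac x) D = D.indicator (fun _ => (1:ℝ≥0∞)) x := fun x =>
          Measure.dirac_apply' x hD
        rw [lintegral_congr this, lintegral_indicator hD, setLIntegral_one,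
          Measure.restrict_apply hD]
      rw [h A B hA hB, h B A hB hA, Set.inter_comm]
  | succ n ih =>
      intro A B hA hB
      have hindA : Measurable (A.indicator (fun _ => (1:ℝ≥0∞))) :=
        measurable_const.indicator hA
      have hindB : Measurable (B.indicator (fun _ => (1:ℝ≥0∞))) :=
        measurable_const.indicator hB
      have hPB : Measurable fun y => P y B := Kernel.measurable_coe P hB
      have hKA : Measurable fun y => kiter P n y A := Kernel.measurable_coe _ hA
      have h1 : ∫⁻ x in A, kiter P (n+1) x B ∂π = ∫⁻ x, P x B * kiter P n x A ∂π := by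
        rw [setLIntegral_eq_indicator_mul π hA]
        simp_rw [kiter_succ, Kernel.comp_apply' _ _ _ hB]
        rw [kernelSelfAdjoint (kiter P n) π ih hindA hPB]
        congr 1; ext x
        rw [lintegral_indicator hA, setLIntegral_one]
      have h2 : ∫⁻ x in B, kiter P (n+1) x A ∂π = ∫⁻ x, kiter P n x A * P x B ∂π := by
        rw [setLIntegral_eq_indicator_mul π hB]
        simp_rw [kiter_succ' P n, Kernel.comp_apply' _ _ _ hA]
        rw [kernelSelfAdjoint P π hrev hindB hKA]
        congr 1; ext x
        rw [lintegral_indicator hB, setLIntegral_one]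
      rw [h1, h2]
      exact lintegral_congr fun x => mul_comm _ _

lemma kiter_contraction (Q : Kernel X X) [IsMarkovKernel Q] (μ : Measure X)
    [IsProbabilityMeasure μ] (s : ℝ) (hs0 : 0 < s)
    (hminor : ∀ x : X, ∀ A : Set X, MeasurableSet A → ENNReal.ofReal s * μ A ≤ Q x A) (n : ℕ) :
    ∀ w z : X, ∀ B : Set X, MeasurableSet B →
      kiter Q n w B ≤ kiter Q n z B + (ENNReal.ofReal (1 - s))^n := by
  have hle : ∀ u, (ENNReal.ofReal s • μ) ≤ Q u := fun u =>
    Measure.le_iff.mpr fun A hA => by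
      simpa [Measure.smul_apply, smul_eq_mul] using hminor u A hA
  haveI hfin : IsFiniteMeasure (ENNReal.ofReal s • μ) := by
    constructor
    simp only [Measure.smul_apply, smul_eq_mul, measure_univ, mul_one]
    exact ENNReal.ofReal_lt_top
  induction n with
  | zero =>
      intro w z B hB
      simp only [kiter_zero, Kernel.id_apply, pow_zero]
      have h1 : (Measure.dirac w) B ≤ 1 := by
        simpa using measure_mono (μ := Measure.dirac w) (Set.subset_univ B)
      exact le_add_left h1
  | succ n ih =>
      intro w z B hB
      set t := ENNReal.ofReal (1 - s) with ht
      set f : X → ℝ≥0∞ := fun y => kiter Q n y B with hf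
      set I := ⨅ y, f y with hI
      have hdec : ∀ u, kiter Q (n+1) u B
          = ∫⁻ y, f y ∂(Q u - ENNReal.ofReal s • μ) + ∫⁻ y, f y ∂(ENNReal.ofReal s • μ) := by
        intro u
        rw [kiter_succ' Q n, Kernel.comp_apply' _ _ _ hB, ← lintegral_add_measure,
          Measure.sub_add_cancel_of_le (hle u)]
      have hmass : ∀ u, (Q u - ENNReal.ofReal s • μ) Set.univ = t := by
        intro u
        rw [Measure.sub_apply MeasurableSet.univ (hle u)]
        simp only [measure_univ, Measure.smul_apply, smul_eq_mul, mul_one]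
        rw [ht, ENNReal.ofReal_sub _ hs0.le, ENNReal.ofReal_one]
      have hpt : ∀ y, f y ≤ I + t^n := by
        intro y
        rw [← tsub_le_iff_right]
        exact le_iInf fun y' => tsub_le_iff_right.mpr (ih y y' B hB)
      have hupper : ∫⁻ y, f y ∂(Q w - ENNReal.ofReal s • μ) ≤ I * t + t^(n+1) := by
        calc ∫⁻ y, f y ∂(Q w - ENNReal.ofReal s • μ)
            ≤ ∫⁻ _, I + t^n ∂(Q w - ENNReal.ofReal s • μ) := lintegral_mono hpt
          _ = (I + t^n) * t := by rw [lintegral_const, hmass w]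
          _ = I * t + t^(n+1) := by rw [add_mul, pow_succ]
      have hlower : I * t ≤ ∫⁻ y, f y ∂(Q z - ENNReal.ofReal s • μ) := by
        calc I * t = ∫⁻ _, I ∂(Q z - ENNReal.ofReal s • μ) := by rw [lintegral_const, hmass z]
          _ ≤ ∫⁻ y, f y ∂(Q z - ENNReal.ofReal s • μ) := lintegral_mono fun y => iInf_le f y
      calc kiter Q (n+1) w B
          = ∫⁻ y, f y ∂(Q w - ENNReal.ofReal s • μ) + ∫⁻ y, f y ∂(ENNReal.ofReal s • μ) :=
            hdec w
        _ ≤ (I * t + t^(n+1)) + ∫⁻ y, f y ∂(ENNReal.ofReal s • μ) := add_le_add_left hupper _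
        _ ≤ (∫⁻ y, f y ∂(Q z - ENNReal.ofReal s • μ) + t^(n+1))
              + ∫⁻ y, f y ∂(ENNReal.ofReal s • μ) :=
            add_le_add_left (add_le_add_left hlower _) _
        _ = kiter Q (n+1) z B + t^(n+1) := by rw [hdec z]; ring

end Aux

/-- A reversible kernel with a minorization `P^m(x,·) ≥ s μ(·)` is
`((⌊log(s/4)/log(1-s)⌋+2)m, s²/8)`-strongly uniformly ergodic. -/
theorem reversible_minorization_strongly_uniformly_ergodic {X : Type*} [MeasurableSpace X]
    (P : Kernel X X) [IsMarkovKernel P]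
    (π : Measure X) [IsProbabilityMeasure π]
    (hstat : ∀ A : Set X, MeasurableSet A → π A = ∫⁻ x, P x A ∂π)
    (hrev : ∀ A B : Set X, MeasurableSet A → MeasurableSet B →
      ∫⁻ x in A, P x B ∂π = ∫⁻ x in B, P x A ∂π)
    (s : ℝ) (hs0 : 0 < s) (hs1 : s < 1) (m : ℕ) (hm : 0 < m)
    (μ : Measure X) [IsProbabilityMeasure μ]
    (hminor : ∀ x : X, ∀ A : Set X, MeasurableSet A →
      ENNReal.ofReal s * μ A ≤ kiter P m x A) :
    ∀ x : X, ∀ A : Set X, MeasurableSet A →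
      ENNReal.ofReal (s ^ 2 / 8) * π A ≤
        kiter P (((⌊Real.log (s / 4) / Real.log (1 - s)⌋).toNat + 2) * m) x A := by
  intro x A hA
  set k0 : ℕ := (⌊Real.log (s / 4) / Real.log (1 - s)⌋).toNat with hk0
  set K : ℕ := k0 + 1 with hKdef
  set t : ℝ≥0∞ := ENNReal.ofReal (1 - s) with ht
  have h1s : (0:ℝ) < 1 - s := by linarith
  -- contraction bound for Q = kiter P m
  have hC := kiter_contraction (kiter P m) μ s hs0 hminor
  -- stationarity for powers of Q
  have hstatQ : ∀ n : ℕ, ∀ B : Set X, MeasurableSet B →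
      π B = ∫⁻ w, kiter (kiter P m) n w B ∂π := by
    intro n B hB
    rw [kiter_kiter P m n]
    exact kiter_stat P π hstat (n*m) B hB
  -- distance to stationarity
  have hD : ∀ n : ℕ, ∀ z : X, ∀ B : Set X, MeasurableSet B →
      π B ≤ kiter (kiter P m) n z B + t^n := by
    intro n z B hB
    calc π B = ∫⁻ w, kiter (kiter P m) n w B ∂π := hstatQ n B hB
      _ ≤ ∫⁻ _, kiter (kiter P m) n z B + t^n ∂π := lintegral_mono fun w => hC n w z B hB
      _ = kiter (kiter P m) n z B + t^n := by rw [lintegral_const, measure_univ, mul_one]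
  -- π dominates s μ
  have hsμπ : ∀ B : Set X, MeasurableSet B → ENNReal.ofReal s * μ B ≤ π B := by
    intro B hB
    calc ENNReal.ofReal s * μ B = ∫⁻ _, ENNReal.ofReal s * μ B ∂π := by
          rw [lintegral_const, measure_univ, mul_one]
      _ ≤ ∫⁻ u, kiter P m u B ∂π := lintegral_mono fun u => hminor u B hB
      _ = π B := (kiter_stat P π hstat m B hB).symm
  have hac : μ ≪ π := by
    refine Measure.AbsolutelyContinuous.mk fun B hB h0 => ?_
    have h1 := hsμπ B hB
    rw [h0] at h1
    have h2 : ENNReal.ofReal s * μ B = 0 := le_antisymm h1 zero_le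
    rcases mul_eq_zero.mp h2 with h | h
    · exact absurd h (by simp [ENNReal.ofReal_eq_zero]; linarith)
    · exact h
  have hh : Measurable (μ.rnDeriv π) := Measure.measurable_rnDeriv μ π
  have hμd : π.withDensity (μ.rnDeriv π) = μ := Measure.withDensity_rnDeriv_eq μ π hac
  set G : Set X := {y | (2:ℝ≥0∞)⁻¹ ≤ μ.rnDeriv π y} with hG
  have hGm : MeasurableSet G := measurableSet_le measurable_const hh
  have hμGc : μ Gᶜ ≤ 2⁻¹ := by
    have he : μ Gᶜ = ∫⁻ y in Gᶜ, μ.rnDeriv π y ∂π := by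
      conv_lhs => rw [← hμd]
      rw [withDensity_apply _ hGm.compl]
    rw [he]
    calc ∫⁻ y in Gᶜ, μ.rnDeriv π y ∂π ≤ ∫⁻ _ in Gᶜ, 2⁻¹ ∂π := by
          refine setLIntegral_mono measurable_const fun y hy => ?_
          exact le_of_not_ge hy
      _ = 2⁻¹ * π Gᶜ := by rw [setLIntegral_const]
      _ ≤ 2⁻¹ * 1 := mul_le_mul_right prob_le_one _
      _ = 2⁻¹ := mul_one _
  have hμG : (2:ℝ≥0∞)⁻¹ ≤ μ G := by
    have hadd : μ G + μ Gᶜ = 1 := by rw [measure_add_measure_compl hGm, measure_univ]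
    have h1 : (1:ℝ≥0∞) ≤ μ G + 2⁻¹ := by rw [← hadd]; exact add_le_add_right hμGc _
    have h2 : (1:ℝ≥0∞) - 2⁻¹ ≤ μ G := tsub_le_iff_right.mpr h1
    calc (2⁻¹:ℝ≥0∞) = 1 - 2⁻¹ := by
          rw [← ENNReal.inv_two_add_inv_two, ENNReal.add_sub_cancel_right (by norm_num)]
      _ ≤ μ G := h2
  have hπG : ENNReal.ofReal (s/2) ≤ π G := by
    have e : ENNReal.ofReal (s/2) = ENNReal.ofReal s * 2⁻¹ := by
      rw [show s/2 = s * (2:ℝ)⁻¹ by ring, ENNReal.ofReal_mul hs0.le,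
        ENNReal.ofReal_inv_of_pos (by norm_num), ENNReal.ofReal_ofNat]
    rw [e]
    exact le_trans (mul_le_mul_right hμG _) (hsμπ G hGm)
  -- numeric bound on t^K
  have htK : t^K ≤ ENNReal.ofReal (s/4) := by
    have hlog1s : Real.log (1-s) < 0 := Real.log_neg h1s (by linarith)
    have hr2 : Real.log (s/4) / Real.log (1-s) ≤ (K:ℝ) := by
      have h3 : (⌊Real.log (s / 4) / Real.log (1 - s)⌋ : ℝ) ≤ (k0:ℝ) := by
        rw [hk0]
        exact_mod_cast Int.self_le_toNat _
      have h4 := Int.lt_floor_add_one (Real.log (s / 4) / Real.log (1 - s))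
      have : (K:ℝ) = (k0:ℝ) + 1 := by rw [hKdef]; push_cast; ring
      rw [this]
      linarith
    have h5 : (K:ℝ) * Real.log (1-s) ≤ Real.log (s/4) := by
      have h6 := mul_le_mul_of_nonpos_right hr2 hlog1s.le
      rwa [div_mul_cancel₀ _ (ne_of_lt hlog1s)] at h6
    have h7 : (1-s)^K ≤ s/4 := by
      have e1 : (1-s)^K = Real.exp ((K:ℝ) * Real.log (1-s)) := by
        rw [Real.exp_nat_mul, Real.exp_log h1s]
      rw [e1, ← Real.exp_log (show (0:ℝ) < s/4 by positivity)]
      exact Real.exp_le_exp.mpr h5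
    calc t^K = ENNReal.ofReal ((1-s)^K) := by rw [ht, ENNReal.ofReal_pow h1s.le]
      _ ≤ ENNReal.ofReal (s/4) := ENNReal.ofReal_le_ofReal h7
  -- key pointwise bound
  have hkey : ∀ y : X, ENNReal.ofReal (s/4) ≤ kiter (kiter P m) K y G := by
    intro y
    have hDy := hD K y G hGm
    have hsum : ENNReal.ofReal (s/4) + t^K ≤ π G := by
      calc ENNReal.ofReal (s/4) + t^K ≤ ENNReal.ofReal (s/4) + ENNReal.ofReal (s/4) :=
            add_le_add_right htK _
        _ = ENNReal.ofReal (s/2) := by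
            rw [← ENNReal.ofReal_add (by positivity) (by positivity)]
            congr 1
            ring
        _ ≤ π G := hπG
    have h8 := le_trans hsum hDy
    exact (ENNReal.add_le_add_iff_right
      (ENNReal.pow_ne_top ENNReal.ofReal_ne_top)).mp h8
  -- measurability helpers
  have hFA : Measurable fun y => kiter (kiter P m) K y A := Kernel.measurable_coe _ hA
  -- main chain
  have hle : (ENNReal.ofReal s • μ) ≤ kiter P m x := Measure.le_iff.mpr fun B hB => by
    simpa [Measure.smul_apply, smul_eq_mul] using hminor x B hB
  have hdecomp : kiter P ((k0+2)*m) x A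
      = ∫⁻ y, kiter (kiter P m) K y A ∂(kiter P m x) := by
    have e1 : kiter (kiter P m) (k0+2) = kiter (kiter P m) K ∘ₖ kiter (kiter P m) 1 := by
      rw [show k0 + 2 = 1 + K from by rw [hKdef]; ring]
      exact kiter_add (kiter P m) 1 K
    have e2 : kiter (kiter P m) 1 = kiter P m := by
      rw [kiter_succ, kiter_zero, Kernel.comp_id]
    rw [← kiter_kiter P m (k0+2), e1, e2, Kernel.comp_apply' _ _ _ hA]
  have step1 : ENNReal.ofReal (s/4) * π A ≤ ∫⁻ y in A, kiter (kiter P m) K y G ∂π := by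
    rw [← setLIntegral_const]
    exact setLIntegral_mono (Kernel.measurable_coe _ hGm) fun y _ => hkey y
  have step2 : ∫⁻ y in A, kiter (kiter P m) K y G ∂π
      = ∫⁻ y in G, kiter (kiter P m) K y A ∂π := by
    have h9 := kiter_rev P π hrev (K*m) G A hGm hA
    rw [kiter_kiter P m K]
    exact h9.symm
  have step3 : 2⁻¹ * ∫⁻ y in G, kiter (kiter P m) K y A ∂π
      ≤ ∫⁻ y, μ.rnDeriv π y * kiter (kiter P m) K y A ∂π := by
    calc 2⁻¹ * ∫⁻ y in G, kiter (kiter P m) K y A ∂π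
        = ∫⁻ y in G, 2⁻¹ * kiter (kiter P m) K y A ∂π := (lintegral_const_mul _ hFA).symm
      _ ≤ ∫⁻ y in G, μ.rnDeriv π y * kiter (kiter P m) K y A ∂π :=
          setLIntegral_mono (hh.mul hFA) fun y hy => mul_le_mul_left hy _
      _ ≤ ∫⁻ y, μ.rnDeriv π y * kiter (kiter P m) K y A ∂π := setLIntegral_le_lintegral _ _
  have step4 : ∫⁻ y, μ.rnDeriv π y * kiter (kiter P m) K y A ∂π
      = ∫⁻ y, kiter (kiter P m) K y A ∂μ := by
    conv_rhs => rw [← hμd]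
    rw [lintegral_withDensity_eq_lintegral_mul π hh hFA]
    rfl
  have step5 : ENNReal.ofReal s * ∫⁻ y, kiter (kiter P m) K y A ∂μ
      ≤ kiter P ((k0+2)*m) x A := by
    calc ENNReal.ofReal s * ∫⁻ y, kiter (kiter P m) K y A ∂μ
        = ∫⁻ y, kiter (kiter P m) K y A ∂(ENNReal.ofReal s • μ) := by
          rw [lintegral_smul_measure, smul_eq_mul]
      _ ≤ ∫⁻ y, kiter (kiter P m) K y A ∂(kiter P m x) := lintegral_mono' hle le_rfl
      _ = kiter P ((k0+2)*m) x A := hdecomp.symm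
  have hnum : ENNReal.ofReal (s^2/8)
      = ENNReal.ofReal s * (2⁻¹ * ENNReal.ofReal (s/4)) := by
    rw [show ((2:ℝ≥0∞)⁻¹) = ENNReal.ofReal ((2:ℝ)⁻¹) from by
        rw [ENNReal.ofReal_inv_of_pos (by norm_num), ENNReal.ofReal_ofNat],
      ← ENNReal.ofReal_mul (by positivity), ← ENNReal.ofReal_mul hs0.le]
    congr 1
    ring
  calc ENNReal.ofReal (s^2/8) * π A
      = ENNReal.ofReal s * (2⁻¹ * (ENNReal.ofReal (s/4) * π A)) := by
        rw [hnum]; ring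
    _ ≤ ENNReal.ofReal s * (2⁻¹ * ∫⁻ y in A, kiter (kiter P m) K y G ∂π) :=
        mul_le_mul_right (mul_le_mul_right step1 _) _
    _ = ENNReal.ofReal s * (2⁻¹ * ∫⁻ y in G, kiter (kiter P m) K y A ∂π) := by rw [step2]
    _ ≤ ENNReal.ofReal s * ∫⁻ y, μ.rnDeriv π y * kiter (kiter P m) K y A ∂π :=
        mul_le_mul_right step3 _
    _ = ENNReal.ofReal s * ∫⁻ y, kiter (kiter P m) K y A ∂μ := by rw [step4]
    _ ≤ kiter P ((k0+2)*m) x A := step5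
end

section
/- Define q_n(k) = p^k·Z_n^{-1} for k ≠ n and q_n(n) = p^{2n}·Z_n^{-1}, where Z_n = 1/(1-p) - p^n + p^{2n} and p ∈ (0,1), a probability mass function on {0,1,2,...}. Then sup_j ‖Q_{n+1}(j,·) - Q_n(j,·)‖_TV → 0 as n → ∞, where Q_n(j,·) has pmf q_n independent of j. -/
open Filter

/-- Diminishing adaptation of the counterexample independence proposals:
`sup_j ‖Q_{n+1}(j,·) - Q_n(j,·)‖_TV = (1/2) Σ_k |q_{n+1}(k) - q_n(k)| → 0`. -/
theorem counterexample_proposals_diminishing (p : ℝ) (hp0 : 0 < p) (hp1 : p < 1)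
    (Z : ℕ → ℝ) (hZ : ∀ n, Z n = 1 / (1 - p) - p ^ n + p ^ (2 * n))
    (q : ℕ → ℕ → ℝ)
    (hq : ∀ n k, q n k = if k = n then p ^ (2 * n) / Z n else p ^ k / Z n) :
    Tendsto (fun n => (1 / 2) * ∑' k : ℕ, |q (n + 1) k - q n k|) atTop (nhds 0) := by
  have h1p : (0:ℝ) < 1 - p := by linarith
  have hpabs : |p| < 1 := by rw [abs_of_pos hp0]; exact hp1
  set c : ℕ → ℝ := fun n => |1 / Z n - (1 - p)| with hc
  set e : ℕ → ℝ := fun n => |(p ^ (2 * n) - p ^ n) / Z n| with he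
  -- pointwise bound on distance to the geometric pmf
  have key : ∀ n k, |q n k - (1 - p) * p ^ k| ≤ p ^ k * c n + (if k = n then e n else 0) := by
    intro n k
    rcases eq_or_ne k n with hk | hk
    · subst hk
      rw [hq, if_pos rfl, if_pos rfl]
      have hid : p ^ (2 * k) / Z k - (1 - p) * p ^ k
          = p ^ k * (1 / Z k - (1 - p)) + (p ^ (2 * k) - p ^ k) / Z k := by
        simp only [div_eq_mul_inv, sub_mul, one_mul]; ring
      rw [hid]
      calc |p ^ k * (1 / Z k - (1 - p)) + (p ^ (2 * k) - p ^ k) / Z k|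
          ≤ |p ^ k * (1 / Z k - (1 - p))| + |(p ^ (2 * k) - p ^ k) / Z k| := abs_add_le _ _
        _ = p ^ k * c k + e k := by
            rw [abs_mul, abs_of_nonneg (pow_nonneg hp0.le _)]
    · rw [hq, if_neg hk, if_neg hk]
      have hid : p ^ k / Z n - (1 - p) * p ^ k = p ^ k * (1 / Z n - (1 - p)) := by
        simp only [div_eq_mul_inv, sub_mul, one_mul]; ring
      rw [hid, abs_mul, abs_of_nonneg (pow_nonneg hp0.le _), add_zero]
  -- summability pieces
  have hgeo : Summable (fun k : ℕ => p ^ k) := summable_geometric_of_lt_one hp0.le hp1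
  have hite : ∀ n, Summable (fun k : ℕ => if k = n then e n else 0) := by
    intro n
    refine summable_of_ne_finset_zero (s := {n}) ?_
    intro k hk
    simp only [Finset.mem_singleton] at hk
    simp [hk]
  have hsum_bound : ∀ n, Summable (fun k => p ^ k * c n + (if k = n then e n else 0)) :=
    fun n => (hgeo.mul_right _).add (hite n)
  set B : ℕ → ℝ := fun n => (1 - p)⁻¹ * c n + e n with hB
  have htsum_bound : ∀ n, (∑' k : ℕ, (p ^ k * c n + (if k = n then e n else 0))) = B n := by
    intro n
    rw [Summable.tsum_add (hgeo.mul_right _) (hite n), tsum_mul_right, tsum_geometric_of_lt_one hp0.le hp1,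
      tsum_ite_eq]
  -- the main bound on the tsum
  have hS : ∀ n, (∑' k : ℕ, |q (n + 1) k - q n k|) ≤ B (n + 1) + B n := by
    intro n
    have hb1 := hsum_bound (n + 1)
    have hb2 := hsum_bound n
    have hle : ∀ k, |q (n + 1) k - q n k|
        ≤ (p ^ k * c (n + 1) + (if k = n + 1 then e (n + 1) else 0))
          + (p ^ k * c n + (if k = n then e n else 0)) := by
      intro k
      calc |q (n + 1) k - q n k|
          ≤ |q (n + 1) k - (1 - p) * p ^ k| + |(1 - p) * p ^ k - q n k| :=
            abs_sub_le _ _ _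
        _ = |q (n + 1) k - (1 - p) * p ^ k| + |q n k - (1 - p) * p ^ k| := by
            rw [abs_sub_comm ((1 - p) * p ^ k)]
        _ ≤ _ := add_le_add (key (n + 1) k) (key n k)
    have hsum : Summable (fun k => |q (n + 1) k - q n k|) :=
      (hb1.add hb2).of_nonneg_of_le (fun k => abs_nonneg _) hle
    calc (∑' k : ℕ, |q (n + 1) k - q n k|)
        ≤ ∑' k : ℕ, ((p ^ k * c (n + 1) + (if k = n + 1 then e (n + 1) else 0))
            + (p ^ k * c n + (if k = n then e n else 0))) :=
          Summable.tsum_le_tsum hle hsum (hb1.add hb2)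
      _ = B (n + 1) + B n := by rw [Summable.tsum_add hb1 hb2, htsum_bound, htsum_bound]
  -- limits
  have hpn : Tendsto (fun n : ℕ => p ^ n) atTop (nhds 0) :=
    tendsto_pow_atTop_nhds_zero_of_abs_lt_one hpabs
  have hp2n : Tendsto (fun n : ℕ => p ^ (2 * n)) atTop (nhds 0) := by
    simp_rw [pow_mul]
    exact tendsto_pow_atTop_nhds_zero_of_abs_lt_one
      (by rw [abs_pow]; exact pow_lt_one₀ (abs_nonneg p) hpabs (by norm_num))
  have hZlim : Tendsto Z atTop (nhds (1 / (1 - p))) := by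
    have hZeq : Z = fun n => 1 / (1 - p) - p ^ n + p ^ (2 * n) := funext hZ
    rw [hZeq]
    simpa using (tendsto_const_nhds.sub hpn).add hp2n
  have hZne : (1 : ℝ) / (1 - p) ≠ 0 := one_div_ne_zero h1p.ne'
  have hinv : Tendsto (fun n => 1 / Z n) atTop (nhds (1 - p)) := by
    have h := Tendsto.div (tendsto_const_nhds (x := (1:ℝ))) hZlim hZne
    rw [one_div_one_div] at h
    exact h
  have hctend : Tendsto c atTop (nhds 0) := by
    have h := (hinv.sub_const (1 - p)).abs
    simp only [sub_self, abs_zero] at h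
    exact h
  have hetend : Tendsto e atTop (nhds 0) := by
    have hnum : Tendsto (fun n : ℕ => p ^ (2 * n) - p ^ n) atTop (nhds 0) := by
      simpa using hp2n.sub hpn
    have := (Tendsto.div hnum hZlim hZne).abs
    simpa using this
  have hBtend : Tendsto B atTop (nhds 0) := by
    have h := (hctend.const_mul (1 - p)⁻¹).add hetend
    rw [mul_zero, add_zero] at h
    exact h
  have hB1tend : Tendsto (fun n => B (n + 1)) atTop (nhds 0) :=
    hBtend.comp (tendsto_add_atTop_nat 1)
  have hgtend : Tendsto (fun n => (1 / 2 : ℝ) * (B (n + 1) + B n)) atTop (nhds 0) := by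
    have := (hB1tend.add hBtend).const_mul (1 / 2 : ℝ)
    simpa using this
  refine squeeze_zero (fun n => ?_) (fun n => ?_) hgtend
  · exact mul_nonneg (by norm_num) (tsum_nonneg fun k => abs_nonneg _)
  · exact mul_le_mul_of_nonneg_left (hS n) (by norm_num)
end

section
/- With q_n as above (q_n(k) = p^k/Z_n for k≠n, q_n(n) = p^{2n}/Z_n, Z_n = 1/(1-p) - p^n + p^{2n}, p ∈ (0,1)) and target π(k) = p^k(1-p) on {0,1,2,...}, let P_n be the independence Metropolis kernel with proposal q_n. Then P_{n+1}(n,{0}) - P_n(n,{0}) = q_{n+1}(0) - q_n(0)·p^n, and this quantity converges to 1 - p ≠ 0 as n → ∞. Hence sup_j ‖P_{n+1}(j,·)-P_n(j,·)‖_TV does not converge to 0. -/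
open Filter

/-- The counterexample independence Metropolis kernels do not exhibit diminishing
adaptation: `P_{n+1}(n,{0}) - P_n(n,{0}) = q_{n+1}(0) - q_n(0) pⁿ → 1 - p ≠ 0`. -/
theorem counterexample_kernels_not_diminishing (p : ℝ) (hp0 : 0 < p) (hp1 : p < 1)
    (Z : ℕ → ℝ) (hZ : ∀ n, Z n = 1 / (1 - p) - p ^ n + p ^ (2 * n))
    (q : ℕ → ℕ → ℝ)
    (hq : ∀ n k, q n k = if k = n then p ^ (2 * n) / Z n else p ^ k / Z n)
    (π : ℕ → ℝ) (hπ : ∀ k, π k = p ^ k * (1 - p)) :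
    (∀ n : ℕ,
        min (q (n + 1) 0) (π 0 / π n * q (n + 1) n)
          - min (q n 0) (π 0 / π n * q n n)
        = q (n + 1) 0 - q n 0 * p ^ n) ∧
    Tendsto (fun n : ℕ =>
        min (q (n + 1) 0) (π 0 / π n * q (n + 1) n)
          - min (q n 0) (π 0 / π n * q n n)) atTop (nhds (1 - p)) ∧
    (1 - p ≠ 0) ∧
    ¬ Tendsto (fun n : ℕ =>
        min (q (n + 1) 0) (π 0 / π n * q (n + 1) n)
          - min (q n 0) (π 0 / π n * q n n)) atTop (nhds 0) := by
  have hp1' : (0:ℝ) < 1 - p := by linarith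
  have hpn : ∀ n : ℕ, 0 < p ^ n := fun n => pow_pos hp0 n
  have hpn1 : ∀ n : ℕ, p ^ n ≤ 1 := fun n => pow_le_one₀ hp0.le hp1.le
  have hZpos : ∀ n, 0 < Z n := by
    intro n
    rw [hZ]
    have h1 : (1:ℝ) ≤ 1/(1-p) := by rw [le_div_iff₀ hp1']; nlinarith
    nlinarith [hpn (2*n), hpn1 n]
  have hq0 : ∀ n, q n 0 = 1 / Z n := by
    intro n
    rw [hq]
    rcases Nat.eq_zero_or_pos n with h | h
    · subst h; simp
    · rw [if_neg (by omega)]; simp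
  have key : ∀ n : ℕ,
      min (q (n + 1) 0) (π 0 / π n * q (n + 1) n)
        - min (q n 0) (π 0 / π n * q n n)
      = 1 / Z (n + 1) - p ^ n / Z n := by
    intro n
    have hπ0 : π 0 / π n = 1 / p ^ n := by
      rw [hπ, hπ]; field_simp
    have h1 : π 0 / π n * q (n + 1) n = 1 / Z (n + 1) := by
      rw [hπ0, hq, if_neg (by omega)]
      field_simp
    have h2 : π 0 / π n * q n n = p ^ n / Z n := by
      rw [hπ0, hq, if_pos rfl, two_mul, pow_add]
      field_simp
    rw [hq0, hq0, h1, h2, min_self,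
      min_eq_right ((div_le_div_iff_of_pos_right (hZpos n)).mpr (hpn1 n))]
  have heq : ∀ n : ℕ,
      min (q (n + 1) 0) (π 0 / π n * q (n + 1) n)
        - min (q n 0) (π 0 / π n * q n n)
      = q (n + 1) 0 - q n 0 * p ^ n := by
    intro n
    rw [key n, hq0, hq0]
    ring
  have hZne : (1:ℝ)/(1-p) ≠ 0 := by positivity
  have hpow : Tendsto (fun n : ℕ => p ^ n) atTop (nhds 0) :=
    tendsto_pow_atTop_nhds_zero_of_lt_one hp0.le hp1
  have hpow2 : Tendsto (fun n : ℕ => p ^ (2 * n)) atTop (nhds 0) := by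
    simp only [pow_mul]
    exact tendsto_pow_atTop_nhds_zero_of_lt_one (by positivity) (by nlinarith)
  have hZt : Tendsto Z atTop (nhds (1/(1-p))) := by
    have := ((tendsto_const_nhds (x := (1:ℝ)/(1-p)) (f := (atTop : Filter ℕ))).sub hpow).add hpow2
    simp only [sub_zero, add_zero] at this
    exact this.congr fun n => (hZ n).symm
  have hinv : Tendsto (fun n => 1 / Z n) atTop (nhds (1 - p)) := by
    have := hZt.inv₀ hZne
    simp only [one_div, inv_inv] at this
    simpa [one_div] using this
  have hshift : Tendsto (fun n : ℕ => 1 / Z (n + 1)) atTop (nhds (1 - p)) :=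
    hinv.comp (tendsto_add_atTop_nat 1)
  have hsecond : Tendsto (fun n : ℕ => p ^ n / Z n) atTop (nhds 0) := by
    have := hpow.mul (hZt.inv₀ hZne)
    simp only [zero_mul] at this
    exact this.congr fun n => by rw [div_eq_mul_inv]
  have hT : Tendsto (fun n : ℕ =>
      min (q (n + 1) 0) (π 0 / π n * q (n + 1) n)
        - min (q n 0) (π 0 / π n * q n n)) atTop (nhds (1 - p)) := by
    have := hshift.sub hsecond
    simp only [sub_zero] at this
    exact this.congr fun n => (key n).symm
  refine ⟨heq, hT, by linarith, fun h => ?_⟩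
  have := tendsto_nhds_unique h hT
  linarith
end

section
/- Define b_1 = 1000 and b_n = b_{n-1}(1 + 1/(10 + log n)) for n ≥ 2, and let p_n := exp(-b_n / (2(10 + log n)²)). Then Σ_{n=1}^∞ p_n < ∞. -/
open Real Filter

/-- Summability of `p_n = exp(-b_n / (2(10 + log n)²))` where `b_1 = 1000` and
`b_n = b_{n-1}(1 + 1/(10 + log n))`. -/
theorem summable_counterexample_p (b : ℕ → ℝ)
    (hb1 : b 1 = 1000)
    (hbn : ∀ n, 2 ≤ n → b n = b (n - 1) * (1 + 1 / (10 + Real.log n))) :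
    Summable (fun n : ℕ => Real.exp (-(b n) / (2 * (10 + Real.log n) ^ 2))) := by
  have hL : ∀ n : ℕ, 1 ≤ n → (10:ℝ) ≤ 10 + Real.log n := by
    intro n hn
    have : (0:ℝ) ≤ Real.log n := Real.log_nonneg (by exact_mod_cast hn)
    linarith
  -- lower bound on b by induction
  have key : ∀ n : ℕ, 1 ≤ n → 1000 * (1 + ((n:ℝ) - 1) / (10 + Real.log n)) ≤ b n := by
    intro n hn
    induction n, hn using Nat.le_induction with
    | base => simp [hb1]
    | succ n hn ih =>
      have hsucc : b (n+1) = b n * (1 + 1 / (10 + Real.log ((n:ℝ)+1))) := by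
        have h := hbn (n+1) (by omega)
        simpa using h
      have hL1 : (10:ℝ) ≤ 10 + Real.log ((n:ℝ)+1) := by
        have := hL (n+1) (by omega)
        push_cast at this
        exact this
      have hL0 : (10:ℝ) ≤ 10 + Real.log n := hL n hn
      have hn1 : (1:ℝ) ≤ n := by exact_mod_cast hn
      have hmono : Real.log (n:ℝ) ≤ Real.log ((n:ℝ)+1) :=
        Real.log_le_log (by linarith) (by linarith)
      set L : ℝ := 10 + Real.log ((n:ℝ)+1) with hLdef
      set L' : ℝ := 10 + Real.log (n:ℝ) with hL'def
      have hLpos : (0:ℝ) < L := by linarith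
      have h1 : 1000 * (1 + ((n:ℝ) - 1) / L) ≤ 1000 * (1 + ((n:ℝ) - 1) / L') := by
        gcongr
        · linarith
      have h2 : 1000 * (1 + ((n:ℝ) - 1) / L) * (1 + 1 / L) ≤ b n * (1 + 1 / L) := by
        apply mul_le_mul_of_nonneg_right (le_trans h1 ih)
        have : (0:ℝ) < 1 / L := by positivity
        linarith
      have expand : 1000 * (1 + ((n:ℝ) - 1) / L) * (1 + 1 / L)
          - 1000 * (1 + (((n:ℝ)+1) - 1) / L) = 1000 * ((n:ℝ) - 1) / L ^ 2 := by
        field_simp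
        ring
      have hpos : (0:ℝ) ≤ 1000 * ((n:ℝ) - 1) / L ^ 2 :=
        div_nonneg (by linarith) (by positivity)
      have h3 : 1000 * (1 + (((n:ℝ)+1) - 1) / L) ≤ 1000 * (1 + ((n:ℝ) - 1) / L) * (1 + 1 / L) := by
        linarith
      rw [hsucc]
      push_cast
      calc 1000 * (1 + (((n:ℝ)+1) - 1) / L) ≤ 1000 * (1 + ((n:ℝ) - 1) / L) * (1 + 1 / L) := h3
        _ ≤ b n * (1 + 1 / L) := h2
  -- summability by comparison with 1/n^2
  have hg : Summable (fun n : ℕ => 1 / (n:ℝ) ^ 2) :=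
    Real.summable_one_div_nat_pow.mpr one_lt_two
  apply summable_of_isBigO_nat hg
  rw [Asymptotics.isBigO_iff]
  refine ⟨1, ?_⟩
  filter_upwards [eventually_ge_atTop 35000] with n hn
  have hn1 : (1:ℝ) ≤ n := by exact_mod_cast (by omega : 1 ≤ n)
  have hn0 : (0:ℝ) < n := by linarith
  have hnbig : (35000:ℝ) ≤ n := by exact_mod_cast hn
  set x : ℝ := (n:ℝ) ^ ((1:ℝ)/8) with hxdef
  have hx1 : (1:ℝ) ≤ x := Real.one_le_rpow hn1 (by norm_num)
  have hx8 : x ^ (8:ℕ) = (n:ℝ) := by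
    rw [hxdef, ← Real.rpow_natCast ((n:ℝ) ^ ((1:ℝ)/8)) 8, ← Real.rpow_mul (le_of_lt hn0)]
    norm_num
  have hlog : Real.log n ≤ 8 * x := by
    have h := Real.log_le_rpow_div (le_of_lt hn0) (by norm_num : (0:ℝ) < 1/8)
    calc Real.log n ≤ (n:ℝ) ^ ((1:ℝ)/8) / (1/8) := h
      _ = 8 * x := by rw [hxdef]; ring
  have hlog0 : (0:ℝ) ≤ Real.log n := Real.log_nonneg hn1
  set L : ℝ := 10 + Real.log (n:ℝ) with hLdef
  have hL10 : (10:ℝ) ≤ L := hL n (by omega)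
  have hLpos : (0:ℝ) < L := by linarith
  have hLx : L ≤ 18 * x := by
    have : (10:ℝ) ≤ 10 * x := by linarith
    rw [hLdef]; linarith
  have hx4 : (187:ℝ) ≤ x ^ (4:ℕ) := by
    nlinarith [hx8, hnbig, hx1, sq_nonneg (x^4 - 187), pow_pos (lt_of_lt_of_le one_pos hx1) 4]
  have hbig : 4 * Real.log n * L ^ 3 ≤ 1000 * n := by
    have h1 : 4 * Real.log n * L ^ 3 ≤ 4 * (8 * x) * (18 * x) ^ 3 := by
      gcongr
    have h2 : 4 * (8 * x) * (18 * x) ^ 3 = 186624 * x ^ 4 := by ring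
    have h3 : (186624:ℝ) * x ^ 4 ≤ 1000 * x ^ 8 := by
      nlinarith [hx4, pow_pos (lt_of_lt_of_le one_pos hx1) 4]
    calc 4 * Real.log n * L ^ 3 ≤ 186624 * x ^ 4 := by linarith
      _ ≤ 1000 * x ^ 8 := h3
      _ = 1000 * n := by rw [← hx8]
  -- b n ≥ 1000 n / L
  have hbLB : 1000 * (n:ℝ) / L ≤ b n := by
    have hk := key n (by omega)
    have e : (1 + ((n:ℝ) - 1) / L) * L = L + ((n:ℝ) - 1) := by field_simp
    have : 1000 * (n:ℝ) / L ≤ 1000 * (1 + ((n:ℝ) - 1) / L) := by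
      rw [div_le_iff₀ hLpos]
      nlinarith [e]
    linarith
  have hdiv : 2 * Real.log n ≤ b n / (2 * L ^ 2) := by
    have step1 : 2 * Real.log n ≤ (1000 * (n:ℝ) / L) / (2 * L ^ 2) := by
      rw [le_div_iff₀ (by positivity), le_div_iff₀ hLpos]
      nlinarith [hbig]
    have step2 : (1000 * (n:ℝ) / L) / (2 * L ^ 2) ≤ b n / (2 * L ^ 2) := by
      gcongr
    linarith
  have hexp : -(b n) / (2 * L ^ 2) ≤ -(2 * Real.log n) := by
    rw [neg_div]
    exact neg_le_neg hdiv
  have hval : Real.exp (-(2 * Real.log n)) = 1 / (n:ℝ) ^ 2 := by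
    rw [Real.exp_neg, two_mul, Real.exp_add, Real.exp_log hn0]
    rw [one_div]
    congr 1
    ring
  calc ‖Real.exp (-(b n) / (2 * L ^ 2))‖ = Real.exp (-(b n) / (2 * L ^ 2)) := by
        rw [Real.norm_eq_abs, abs_of_pos (Real.exp_pos _)]
    _ ≤ Real.exp (-(2 * Real.log n)) := Real.exp_le_exp.mpr hexp
    _ = 1 / (n:ℝ) ^ 2 := hval
    _ ≤ 1 * ‖1 / (n:ℝ) ^ 2‖ := by
        rw [one_mul, Real.norm_eq_abs, abs_of_pos (by positivity)]
end

section
/- With b_n as above (b_1 = 1000, b_n = b_{n-1}(1 + 1/(10+log n))), we have b_n ≥ 1000(1 + Σ_{i=2}^n 1/(10 + log n)) ≥ 32 + 2 log(n+1) for every n ≥ 1. -/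
open Finset

private lemma sum_const_icc (n : ℕ) (hn : 1 ≤ n) (c : ℝ) :
    ∑ _i ∈ Finset.Icc 2 n, c = ((n : ℝ) - 1) * c := by
  rw [Finset.sum_const, Nat.card_Icc]
  have : n + 1 - 2 = n - 1 := by omega
  rw [this, nsmul_eq_mul]
  congr 1
  push_cast [Nat.cast_sub hn]
  ring

private lemma log_succ_le (n : ℕ) (hn : 1 ≤ n) :
    Real.log (n + 1) ≤ Real.log n + 1 := by
  have h1 : (0:ℝ) < n := by exact_mod_cast hn
  have h2 : ((n:ℝ) + 1) ≤ 2 * n := by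
    have : (1:ℝ) ≤ n := by exact_mod_cast hn
    linarith
  have := Real.log_le_log (by positivity) h2
  rw [Real.log_mul (by norm_num) (ne_of_gt h1)] at this
  have h3 : Real.log 2 ≤ 1 := by
    have := Real.log_two_lt_d9
    linarith
  linarith

private lemma key_growth (b : ℕ → ℝ)
    (hb1 : b 1 = 1000)
    (hbn : ∀ n, 2 ≤ n → b n = b (n - 1) * (1 + 1 / (10 + Real.log n))) :
    ∀ n : ℕ, 1 ≤ n → 1000 * (1 + ((n : ℝ) - 1) / (10 + Real.log n)) ≤ b n := by
  intro n hn
  induction n, hn using Nat.le_induction with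
  | base => simp [hb1]
  | succ n hn ih =>
    have hbs : b (n + 1) = b n * (1 + 1 / (10 + Real.log (n + 1))) := by
      have := hbn (n + 1) (by omega)
      simpa using this
    have hL0 : (0:ℝ) ≤ Real.log n := Real.log_natCast_nonneg n
    have hLM : Real.log n ≤ Real.log (n + 1) := by
      apply Real.log_le_log (by exact_mod_cast hn)
      linarith
    have hM0 : (0:ℝ) ≤ Real.log (n + 1) := le_trans hL0 hLM
    set L := Real.log (n : ℝ)
    set M := Real.log ((n : ℝ) + 1)
    have hLpos : (0:ℝ) < 10 + L := by linarith
    have hMpos : (0:ℝ) < 10 + M := by linarith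
    have hn1 : (1:ℝ) ≤ n := by exact_mod_cast hn
    set a : ℝ := ((n : ℝ) - 1) / (10 + L) with ha_def
    set d : ℝ := 1 / (10 + M) with hd_def
    have ha : a * (10 + L) = (n : ℝ) - 1 := div_mul_cancel₀ _ (ne_of_gt hLpos)
    have hd : d * (10 + M) = 1 := div_mul_cancel₀ _ (ne_of_gt hMpos)
    have ha0 : 0 ≤ a := div_nonneg (by linarith) (le_of_lt hLpos)
    have hd0 : 0 < d := by positivity
    have step1 : 1000 * (1 + a) * (1 + d) ≤ b n * (1 + d) := by
      apply mul_le_mul_of_nonneg_right ih (by linarith)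
    rw [hbs]
    push_cast
    have goal2 : 1000 * (1 + ((n:ℝ) + 1 - 1) / (10 + M)) ≤ 1000 * (1 + a) * (1 + d) := by
      have hnd : ((n:ℝ) + 1 - 1) / (10 + M) = (n : ℝ) * d := by
        rw [hd_def]; field_simp; ring
      rw [hnd]
      -- need: n * d ≤ a + d + a * d, i.e. (n-1) * d ≤ a * (1 + d)
      have had : (n : ℝ) - 1 ≤ a * (10 + M) := by
        nlinarith [mul_nonneg ha0 (sub_nonneg.mpr hLM)]
      nlinarith [mul_nonneg ha0 (le_of_lt hd0)]
    calc 1000 * (1 + ((n:ℝ) + 1 - 1) / (10 + M)) ≤ 1000 * (1 + a) * (1 + d) := goal2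
      _ ≤ b n * (1 + d) := step1

/-- Growth estimate `b_n ≥ 1000(1 + Σ_{i=2}^n 1/(10+log n)) ≥ 32 + 2 log(n+1)`. -/
theorem b_growth_estimate (b : ℕ → ℝ)
    (hb1 : b 1 = 1000)
    (hbn : ∀ n, 2 ≤ n → b n = b (n - 1) * (1 + 1 / (10 + Real.log n))) :
    ∀ n : ℕ, 1 ≤ n →
      1000 * (1 + ∑ _i ∈ Finset.Icc 2 n, 1 / (10 + Real.log n)) ≤ b n ∧
      32 + 2 * Real.log (n + 1)
        ≤ 1000 * (1 + ∑ _i ∈ Finset.Icc 2 n, 1 / (10 + Real.log n)) := by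
  intro n hn
  rw [sum_const_icc n hn]
  have hsum : ((n:ℝ) - 1) * (1 / (10 + Real.log n)) = ((n:ℝ) - 1) / (10 + Real.log n) := by
    ring
  rw [hsum]
  constructor
  · exact key_growth b hb1 hbn n hn
  · -- second inequality
    have hn1 : (1:ℝ) ≤ n := by exact_mod_cast hn
    have hL0 : (0:ℝ) ≤ Real.log n := Real.log_natCast_nonneg n
    set L := Real.log (n:ℝ) with hLdef
    have hLpos : (0:ℝ) < 10 + L := by linarith
    set s : ℝ := Real.sqrt n with hsdef
    have hs1 : (1:ℝ) ≤ s := by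
      rw [hsdef]
      rw [show (1:ℝ) = Real.sqrt 1 from (Real.sqrt_one).symm]
      exact Real.sqrt_le_sqrt hn1
    have hss : s * s = (n : ℝ) := Real.mul_self_sqrt (by linarith)
    have hLs : L ≤ 2 * s - 2 := by
      have h1 : Real.log s ≤ s - 1 := Real.log_le_sub_one_of_pos (by linarith)
      have h2 : L = 2 * Real.log s := by
        rw [hLdef, hsdef, Real.log_sqrt (by linarith)]; ring
      linarith
    have hM : Real.log ((n:ℝ) + 1) ≤ L + 1 := by
      have := log_succ_le n hn
      push_cast at this ⊢
      exact this
    set a : ℝ := ((n : ℝ) - 1) / (10 + L) with ha_def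
    have ha : a * (10 + L) = (n : ℝ) - 1 := div_mul_cancel₀ _ (ne_of_gt hLpos)
    have ha0 : 0 ≤ a := div_nonneg (by linarith) (le_of_lt hLpos)
    have h1 : s * s - 1 ≤ a * (8 + 2 * s) := by
      nlinarith [mul_nonneg ha0 (by linarith : (0:ℝ) ≤ 2 * s - 2 - L)]
    nlinarith [h1, sq_nonneg s, sq_nonneg (s - 1)]
end
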